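/- Let X = ℓ_2(ℤ_+) over ℂ. If T ∈ B_1(X) is such that the generalized kernel ⋃_{k∈ℕ} ker(T^k) is dense in X, then T belongs to the SOT*-closure of the set N_1(X) of nilpotent contractions (operators S ∈ B_1(X) with S^k = 0 for some k ∈ ℕ). -/

import Mathlib

open Filter Topology Metric
open scoped ENNReal

noncomputable section

/-- The strong* operator topology (SOT*) on the space of bounded operators on `X`:
the coarsest topology making all evaluation maps `T ↦ T x` (into `X` with its norm
topology) and all maps `T ↦ T* x* = x* ∘ T` (into `X*` with its norm topology)
continuous. -/
def sotStarOp (X : Type*) [NormedAddCommGroup X] [NormedSpace ℂ X] :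
    TopologicalSpace (X →L[ℂ] X) :=
  (⨅ x : X, TopologicalSpace.induced (fun T : X →L[ℂ] X => T x) inferInstance) ⊓
    (⨅ f : X →L[ℂ] ℂ, TopologicalSpace.induced (fun T : X →L[ℂ] X => f.comp T) inferInstance)

/-- The ball `B_M(X)` of operators of norm at most `M`, with the topology induced by SOT*. -/
def sotStarBall (X : Type*) [NormedAddCommGroup X] [NormedSpace ℂ X] (M : ℝ) :
    TopologicalSpace {T : X →L[ℂ] X // ‖T‖ ≤ M} :=
  TopologicalSpace.induced Subtype.val (sotStarOp X)

section Aux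

variable {E : Type*} [NormedAddCommGroup E] [InnerProductSpace ℂ E] [CompleteSpace E]

/-- Pointwise norm bound for the orthogonal projection (composed with inclusion). -/
theorem aux_proj_apply_norm_le (K : Submodule ℂ E) [CompleteSpace K] (z : E) :
    ‖(K.subtypeL ∘L Submodule.orthogonalProjectionOnto K) z‖ ≤ ‖z‖ := by
  calc ‖(K.subtypeL ∘L Submodule.orthogonalProjectionOnto K) z‖ = ‖Submodule.orthogonalProjectionOnto K z‖ := rfl
    _ ≤ ‖Submodule.orthogonalProjectionOnto K‖ * ‖z‖ := (Submodule.orthogonalProjectionOnto K).le_opNorm z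
    _ ≤ 1 * ‖z‖ := by
        exact mul_le_mul_of_nonneg_right (Submodule.orthogonalProjectionOnto_norm_le K) (norm_nonneg z)
    _ = ‖z‖ := one_mul _

/-- Projections onto an increasing family of closed subspaces with dense union
converge strongly to the identity. -/
theorem aux_proj_tendsto (K : ℕ → Submodule ℂ E) [∀ k, CompleteSpace (K k)]
    (hmono : Monotone K) (hdense : Dense (⋃ k, (K k : Set E))) (x : E) :
    Tendsto (fun k => ((K k).subtypeL ∘L Submodule.orthogonalProjectionOnto (K k)) x) atTop (𝓝 x) := by
  rw [Metric.tendsto_atTop]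
  intro ε hε
  obtain ⟨y, hy, hxy⟩ := hdense.exists_dist_lt x (half_pos hε)
  obtain ⟨_, ⟨N, rfl⟩, hyN⟩ := hy
  refine ⟨N, fun k hk => ?_⟩
  have hyk : y ∈ K k := hmono hk hyN
  have hPy : ((K k).subtypeL ∘L Submodule.orthogonalProjectionOnto (K k)) y = y :=
    Submodule.starProjection_eq_self_iff.mpr hyk
  have h1 : dist (((K k).subtypeL ∘L Submodule.orthogonalProjectionOnto (K k)) x) x ≤
      dist (((K k).subtypeL ∘L Submodule.orthogonalProjectionOnto (K k)) x) y + dist y x :=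
    dist_triangle _ _ _
  have h2 : dist (((K k).subtypeL ∘L Submodule.orthogonalProjectionOnto (K k)) x) y ≤ dist x y := by
    have := aux_proj_apply_norm_le (K k) (x - y)
    rw [map_sub] at this
    rw [dist_eq_norm, dist_eq_norm]
    calc ‖((K k).subtypeL ∘L Submodule.orthogonalProjectionOnto (K k)) x - y‖
        = ‖((K k).subtypeL ∘L Submodule.orthogonalProjectionOnto (K k)) x -
            ((K k).subtypeL ∘L Submodule.orthogonalProjectionOnto (K k)) y‖ := by rw [hPy]
      _ ≤ ‖x - y‖ := this
  have : dist (((K k).subtypeL ∘L Submodule.orthogonalProjectionOnto (K k)) x) x ≤ dist x y + dist y x := by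
    linarith
  calc dist (((K k).subtypeL ∘L Submodule.orthogonalProjectionOnto (K k)) x) x ≤ dist x y + dist y x := this
    _ = dist x y + dist x y := by rw [dist_comm y x]
    _ < ε / 2 + ε / 2 := by linarith
    _ = ε := add_halves ε

/-- Composing a functional with an operator corresponds to applying the adjoint
to the Riesz vector. -/
theorem aux_comp_norm (A : E →L[ℂ] E) (f : E →L[ℂ] ℂ) :
    ‖f.comp A‖ =
      ‖ContinuousLinearMap.adjoint A ((InnerProductSpace.toDual ℂ E).symm f)‖ := by
  set y := (InnerProductSpace.toDual ℂ E).symm f with hy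
  have hfy : f = InnerProductSpace.toDual ℂ E y := by
    rw [hy, LinearIsometryEquiv.apply_symm_apply]
  have key : f.comp A = InnerProductSpace.toDual ℂ E (ContinuousLinearMap.adjoint A y) := by
    ext x
    rw [ContinuousLinearMap.comp_apply, hfy, InnerProductSpace.toDual_apply_apply,
      InnerProductSpace.toDual_apply_apply, ContinuousLinearMap.adjoint_inner_left]
  rw [key, LinearIsometryEquiv.norm_map]

end Aux


theorem aux_tendsto_sotStarOp {X : Type*} [NormedAddCommGroup X] [NormedSpace ℂ X]
    {ι : Type*} {l : Filter ι} {A : ι → X →L[ℂ] X} {B : X →L[ℂ] X}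
    (h1 : ∀ x, Tendsto (fun i => A i x) l (𝓝 (B x)))
    (h2 : ∀ f : X →L[ℂ] ℂ, Tendsto (fun i => f.comp (A i)) l (𝓝 (f.comp B))) :
    Tendsto A l (@nhds _ (sotStarOp X) B) := by
  have h : sotStarOp X =
      (⨅ x : X, TopologicalSpace.induced (fun T : X →L[ℂ] X => T x) inferInstance) ⊓
      (⨅ f : X →L[ℂ] ℂ, TopologicalSpace.induced (fun T : X →L[ℂ] X => f.comp T)
        inferInstance) := rfl
  have hinf := @_root_.nhds_inf (X →L[ℂ] X)
    (⨅ x : X, TopologicalSpace.induced (fun T : X →L[ℂ] X => T x) inferInstance)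
    (⨅ f : X →L[ℂ] ℂ, TopologicalSpace.induced (fun T : X →L[ℂ] X => f.comp T)
      inferInstance) B
  rw [h, hinf, Filter.tendsto_inf]
  constructor
  · rw [_root_.nhds_iInf, Filter.tendsto_iInf]
    intro x
    rw [@nhds_induced _ _ _ (fun T : X →L[ℂ] X => T x) B, Filter.tendsto_comap_iff]
    exact h1 x
  · rw [_root_.nhds_iInf, Filter.tendsto_iInf]
    intro f
    rw [@nhds_induced _ _ _ (fun T : X →L[ℂ] X => f.comp T) B, Filter.tendsto_comap_iff]
    exact h2 f

theorem aux_tendsto_sotStarBall {X : Type*} [NormedAddCommGroup X] [NormedSpace ℂ X] {M : ℝ}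
    {ι : Type*} {l : Filter ι} {A : ι → {T : X →L[ℂ] X // ‖T‖ ≤ M}}
    {B : {T : X →L[ℂ] X // ‖T‖ ≤ M}}
    (h : Tendsto (fun i => (A i).1) l (@nhds _ (sotStarOp X) B.1)) :
    Tendsto A l (@nhds _ (sotStarBall X M) B) := by
  have hb : sotStarBall X M = TopologicalSpace.induced Subtype.val (sotStarOp X) := rfl
  rw [hb, @nhds_induced _ _ (sotStarOp X) Subtype.val B, Filter.tendsto_comap_iff]
  exact h

set_option maxHeartbeats 2000000 in
/-- If `T ∈ B_1(ℓ_2)` has dense generalized kernel `⋃ k, ker (T ^ k)`, then `T` belongs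
to the SOT*-closure of the set of nilpotent contractions. -/
theorem mem_sotStar_closure_nilpotent_of_dense_generalizedKernel
    (T : lp (fun _ : ℕ => ℂ) 2 →L[ℂ] lp (fun _ : ℕ => ℂ) 2) (hT : ‖T‖ ≤ 1)
    (hdense : Dense (⋃ k : ℕ, ((LinearMap.ker (T ^ k).toLinearMap : Submodule ℂ (lp (fun _ : ℕ => ℂ) 2)) :
      Set (lp (fun _ : ℕ => ℂ) 2)))) :
    (⟨T, hT⟩ : {S : lp (fun _ : ℕ => ℂ) 2 →L[ℂ] lp (fun _ : ℕ => ℂ) 2 // ‖S‖ ≤ 1}) ∈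
      @closure _ (sotStarBall (lp (fun _ : ℕ => ℂ) 2) 1)
        {S : {S : lp (fun _ : ℕ => ℂ) 2 →L[ℂ] lp (fun _ : ℕ => ℂ) 2 // ‖S‖ ≤ 1} |
          ∃ k : ℕ, S.1 ^ k = 0} := by
  set E := lp (fun _ : ℕ => ℂ) 2 with hE
  letI : TopologicalSpace {S : E →L[ℂ] E // ‖S‖ ≤ 1} := sotStarBall E 1
  set K : ℕ → Submodule ℂ E := fun k => LinearMap.ker (T ^ k).toLinearMap with hK
  haveI hcomp : ∀ k, CompleteSpace (K k) :=
    fun k => (ContinuousLinearMap.isClosed_ker (T ^ k)).completeSpace_coe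
  set Q : ℕ → (E →L[ℂ] E) := fun k => (K k).subtypeL ∘L Submodule.orthogonalProjectionOnto (K k) with hQ
  set S : ℕ → (E →L[ℂ] E) := fun k => T ∘L Q k with hS
  -- monotonicity of the kernels
  have hmono : Monotone K := by
    intro a b hab x hx
    have : T ^ b = T ^ (b - a) * T ^ a := by
      rw [← pow_add, Nat.sub_add_cancel hab]
    simp only [hK, LinearMap.mem_ker, ContinuousLinearMap.coe_coe] at hx ⊢
    rw [this, ContinuousLinearMap.mul_apply, hx, map_zero]
  -- norm bound on Q k
  have hQnorm : ∀ k, ‖Q k‖ ≤ 1 := by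
    intro k
    refine ContinuousLinearMap.opNorm_le_bound _ zero_le_one fun z => ?_
    rw [one_mul]
    exact aux_proj_apply_norm_le (K k) z
  -- norm bound on S k
  have hSnorm : ∀ k, ‖S k‖ ≤ 1 := by
    intro k
    calc ‖S k‖ ≤ ‖T‖ * ‖Q k‖ := (T.opNorm_comp_le (Q k))
      _ ≤ 1 * 1 := mul_le_mul hT (hQnorm k) (norm_nonneg _) zero_le_one
      _ = 1 := one_mul 1
  -- Q k acts as identity on K k, and ranges in K k
  have hQmem : ∀ k x, Q k x ∈ K k := fun k x => SetLike.coe_mem _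
  have hQid : ∀ k, ∀ v ∈ K k, Q k v = v := fun k v hv =>
    Submodule.starProjection_eq_self_iff.mpr hv
  -- T maps K k into itself
  have hTK : ∀ k, ∀ v ∈ K k, T v ∈ K k := by
    intro k v hv
    simp only [hK, LinearMap.mem_ker, ContinuousLinearMap.coe_coe] at hv ⊢
    have h1 : (T ^ k) (T v) = (T ^ (k + 1)) v := by
      rw [pow_succ, ContinuousLinearMap.mul_apply]
    rw [h1, pow_succ', ContinuousLinearMap.mul_apply, hv, map_zero]
  -- on K k, powers of S k agree with powers of T
  have hpow : ∀ k m, ∀ v ∈ K k, (S k ^ m) v = (T ^ m) v := by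
    intro k m
    induction m with
    | zero => intro v _; simp
    | succ n ih =>
      intro v hv
      have hSv : S k v = T v := by
        simp only [hS, ContinuousLinearMap.comp_apply, hQid k v hv]
      rw [pow_succ, pow_succ, ContinuousLinearMap.mul_apply,
        ContinuousLinearMap.mul_apply, hSv]
      exact ih (T v) (hTK k v hv)
  -- nilpotency
  have hnil : ∀ k, S k ^ (k + 1) = 0 := by
    intro k
    ext x
    have hmem : S k x ∈ K k := by
      simp only [hS, ContinuousLinearMap.comp_apply]
      exact hTK k (Q k x) (hQmem k x)
    have h1 : (S k ^ (k + 1)) x = (S k ^ k) (S k x) := by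
      rw [pow_succ, ContinuousLinearMap.mul_apply]
    have hker : (T ^ k) (S k x) = 0 := hmem
    rw [h1, hpow k k (S k x) hmem, hker]
    simp
  -- strong convergence of Q k to the identity
  have hQtend : ∀ x : E, Tendsto (fun k => Q k x) atTop (𝓝 x) :=
    aux_proj_tendsto K hmono hdense
  -- strong convergence of S k to T
  have hstrong : ∀ x : E, Tendsto (fun k => S k x) atTop (𝓝 (T x)) := by
    intro x
    have : Tendsto (fun k => T (Q k x)) atTop (𝓝 (T x)) :=
      (T.continuous.tendsto x).comp (hQtend x)
    exact this
  -- adjoint of S k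
  have hadj : ∀ k, ContinuousLinearMap.adjoint (S k) =
      Q k ∘L ContinuousLinearMap.adjoint T := by
    intro k
    rw [hS]
    rw [ContinuousLinearMap.adjoint_comp]
    congr 1
    exact (isSelfAdjoint_starProjection (K k)).adjoint_eq
  -- weak* convergence
  have hweak : ∀ f : E →L[ℂ] ℂ, Tendsto (fun k => f.comp (S k)) atTop (𝓝 (f.comp T)) := by
    intro f
    rw [tendsto_iff_norm_sub_tendsto_zero]
    set y := (InnerProductSpace.toDual ℂ E).symm f with hy
    set x0 := ContinuousLinearMap.adjoint T y with hx0
    have heq : ∀ k, ‖f.comp (S k) - f.comp T‖ = ‖Q k x0 - x0‖ := by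
      intro k
      have h1 : f.comp (S k) - f.comp T = f.comp (S k - T) := by
        rw [ContinuousLinearMap.comp_sub]
      rw [h1, aux_comp_norm]
      congr 1
      rw [← hy, map_sub, ContinuousLinearMap.sub_apply, hadj k,
        ContinuousLinearMap.comp_apply, ← hx0]
    have h0 : Tendsto (fun k => ‖Q k x0 - x0‖) atTop (𝓝 0) :=
      tendsto_iff_norm_sub_tendsto_zero.mp (hQtend x0)
    exact h0.congr fun k => (heq k).symm
  -- convergence in the SOT* topology on operators
  have hSOT : Tendsto (fun k => S k) atTop (@nhds _ (sotStarOp ↥E) T) :=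
    aux_tendsto_sotStarOp hstrong hweak
  have hball : Tendsto (fun k => (⟨S k, hSnorm k⟩ : {S : E →L[ℂ] E // ‖S‖ ≤ 1}))
      atTop (@nhds _ (sotStarBall ↥E 1) (⟨T, hT⟩ : {S : E →L[ℂ] E // ‖S‖ ≤ 1})) :=
    aux_tendsto_sotStarBall hSOT
  exact mem_closure_of_tendsto hball
    (Filter.Eventually.of_forall fun k => ⟨k + 1, hnil k⟩)
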